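/- Let A be an n-ary algebra, and suppose that for every k ≥ 1, every tuple c_1,...,c_k ∈ A, and all scalars α_i^j (1 ≤ i ≤ n, 1 ≤ j ≤ k), the vectors c_1,...,c_k,[a_1,...,a_n] are linearly dependent, where a_i = Σ_j α_i^j c_j. Then A is subalgebraic, i.e., [a_1,...,a_n] ∈ span(a_1,...,a_n) for all a_1,...,a_n ∈ A. -/
import Mathlib


def Subalgebraic {k W : Type*} [Field k] [AddCommGroup W] [Module k W] {n : ℕ}
    (μ : MultilinearMap k (fun _ : Fin n => W) W) : Prop :=
  ∀ a : Fin n → W, μ a ∈ Submodule.span k (Set.range a)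

/-- if for every tuple `c_1,…,c_K` and all scalars `α_i^j`, the vectors
`c_1,…,c_K,[a_1,…,a_n]` (with `a_i = ∑_j α_i^j c_j`) are linearly dependent, then the
algebra is subalgebraic. -/
theorem subalgebraic_of_linear_dependence
    {k V : Type*} [Field k] [AddCommGroup V] [Module k V]
    (n : ℕ) (hn : 2 ≤ n) (μ : MultilinearMap k (fun _ : Fin n => V) V)
    (h : ∀ (K : ℕ), 1 ≤ K → ∀ (c : Fin K → V) (α : Fin n → Fin K → k),
      ¬ LinearIndependent k
        (Fin.snoc c (μ (fun i => ∑ j : Fin K, α i j • c j)) : Fin (K + 1) → V)) :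
    Subalgebraic μ := by
  intro a
  obtain ⟨t, hts, hspan, hli⟩ := exists_linearIndependent k (Set.range a)
  by_cases ht : t = ∅
  · have hbot : Submodule.span k (Set.range a) = ⊥ := by
      rw [← hspan, ht, Submodule.span_empty]
    have ha : a = fun _ => 0 := by
      funext i
      have hmem : a i ∈ Submodule.span k (Set.range a) :=
        Submodule.subset_span ⟨i, rfl⟩
      rw [hbot] at hmem
      simpa using hmem
    have h0 : μ a = 0 := by
      rw [ha]
      exact μ.map_coord_zero ⟨0, by omega⟩ rfl
    rw [h0]
    exact Submodule.zero_mem _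
  · have htf : t.Finite := (Set.finite_range a).subset hts
    haveI : Fintype t := htf.fintype
    set K := Fintype.card t with hK
    have hK1 : 1 ≤ K := Fintype.card_pos_iff.mpr
      (Set.nonempty_iff_ne_empty.mpr ht).to_subtype
    let e : Fin K ≃ t := (Fintype.equivFin t).symm
    let c : Fin K → V := fun j => (e j : V)
    have hrange : Set.range c = t := by
      have : Set.range c = Set.range ((↑) : t → V) := by
        apply Set.range_comp_subset_range e (fun x : t => (x : V)) |>.antisymm
        rintro x ⟨y, rfl⟩
        exact ⟨e.symm y, by simp [c]⟩
      rw [this, Subtype.range_coe]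
    have hlic : LinearIndependent k c := hli.comp e e.injective
    have hmem : ∀ i, a i ∈ Submodule.span k (Set.range c) := by
      intro i
      rw [hrange, hspan]
      exact Submodule.subset_span ⟨i, rfl⟩
    have hex : ∀ i, ∃ f : Fin K → k, ∑ j, f j • c j = a i := fun i =>
      (Submodule.mem_span_range_iff_exists_fun k).mp (hmem i)
    choose α hα using hex
    have harg : (fun i => ∑ j : Fin K, α i j • c j) = a := funext hα
    have hdep := h K hK1 c α
    rw [harg, linearIndependent_fin_snoc] at hdep
    push_neg at hdep
    have := hdep hlic
    rw [hrange, hspan] at this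
    exact this
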